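/- Assume φ₁, φ₂ are Schwartz functions and V is smooth with all derivatives of at most polynomial growth. Then for all pairs f = (f₁, f₂) and g = (g₁, g₂) of Schwartz functions ℝᵈ → ℂ one has ⟨𝒜f, g⟩ = ⟨f, 𝒜g⟩, ⟨𝒟f, g⟩ = ⟨f, 𝒟g⟩, and ⟨ℬf, g⟩ = -⟨f, 𝒞g⟩, i.e. 𝒜 and 𝒟 are symmetric and the adjoint of ℬ is -𝒞 with respect to the L² inner product. -/

import Mathlib

/- Bogoliubov-de Gennes operators for two-component BECs.
STATEMENT 1: with Schwartz data, 𝒜 and 𝒟 are symmetric and the L²-adjoint of ℬ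
is -𝒞: ⟨𝒜f,g⟩ = ⟨f,𝒜g⟩, ⟨𝒟f,g⟩ = ⟨f,𝒟g⟩ and ⟨ℬf,g⟩ = -⟨f,𝒞g⟩. -/

open MeasureTheory
noncomputable section

open scoped ComplexConjugate

/-- Pairs of complex-valued functions on ℝᵈ. -/
abbrev Pair (d : ℕ) := ((Fin d → ℝ) → ℂ) × ((Fin d → ℝ) → ℂ)

/-- Partial derivative in the `i`-th coordinate direction. -/
def pd {d : ℕ} (i : Fin d) (f : (Fin d → ℝ) → ℂ) (x : Fin d → ℝ) : ℂ :=
  fderiv ℝ f x (Pi.single i 1)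

/-- The Laplacian. -/
def lap {d : ℕ} (f : (Fin d → ℝ) → ℂ) (x : Fin d → ℝ) : ℂ :=
  ∑ i : Fin d, pd i (pd i f) x

/-- The scalar operator L₁ = -(1/2)Δ + V + δ/2 + 2β₁₁|φ₁|² + β₁₂|φ₂|² - μ. -/
def L1 {d : ℕ} (β11 β12 δ μ : ℝ) (V : (Fin d → ℝ) → ℝ) (φ1 φ2 : (Fin d → ℝ) → ℂ)
    (f : (Fin d → ℝ) → ℂ) (x : Fin d → ℝ) : ℂ :=
  -(1/2 : ℂ) * lap f x
    + ((V x + δ/2 + 2*β11*‖φ1 x‖^2 + β12*‖φ2 x‖^2 - μ : ℝ) : ℂ) * f x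

/-- The scalar operator L₂ = -(1/2)Δ + V - δ/2 + β₁₂|φ₁|² + 2β₂₂|φ₂|² - μ. -/
def L2 {d : ℕ} (β22 β12 δ μ : ℝ) (V : (Fin d → ℝ) → ℝ) (φ1 φ2 : (Fin d → ℝ) → ℂ)
    (f : (Fin d → ℝ) → ℂ) (x : Fin d → ℝ) : ℂ :=
  -(1/2 : ℂ) * lap f x
    + ((V x - δ/2 + β12*‖φ1 x‖^2 + 2*β22*‖φ2 x‖^2 - μ : ℝ) : ℂ) * f x

/-- The operator 𝒜. -/
def opA {d : ℕ} (β11 β22 β12 δ Ω μ : ℝ) (V : (Fin d → ℝ) → ℝ)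
    (φ1 φ2 : (Fin d → ℝ) → ℂ) (g : Pair d) : Pair d :=
  (fun x => L1 β11 β12 δ μ V φ1 φ2 g.1 x
      + ((β12 : ℂ) * φ1 x * conj (φ2 x) + (Ω : ℂ)/2) * g.2 x,
   fun x => ((β12 : ℂ) * conj (φ1 x) * φ2 x + (Ω : ℂ)/2) * g.1 x
      + L2 β22 β12 δ μ V φ1 φ2 g.2 x)

/-- The operator ℬ. -/
def opB {d : ℕ} (β11 β22 β12 : ℝ) (φ1 φ2 : (Fin d → ℝ) → ℂ) (g : Pair d) : Pair d :=
  (fun x => (β11 : ℂ) * (φ1 x)^2 * g.1 x + (β12 : ℂ) * φ1 x * φ2 x * g.2 x,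
   fun x => (β12 : ℂ) * φ1 x * φ2 x * g.1 x + (β22 : ℂ) * (φ2 x)^2 * g.2 x)

/-- The operator 𝒞. -/
def opC {d : ℕ} (β11 β22 β12 : ℝ) (φ1 φ2 : (Fin d → ℝ) → ℂ) (g : Pair d) : Pair d :=
  (fun x => -((β11 : ℂ) * (conj (φ1 x))^2 * g.1 x
      + (β12 : ℂ) * conj (φ1 x) * conj (φ2 x) * g.2 x),
   fun x => -((β12 : ℂ) * conj (φ1 x) * conj (φ2 x) * g.1 x
      + (β22 : ℂ) * (conj (φ2 x))^2 * g.2 x))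

/-- The operator 𝒟. -/
def opD {d : ℕ} (β11 β22 β12 δ Ω μ : ℝ) (V : (Fin d → ℝ) → ℝ)
    (φ1 φ2 : (Fin d → ℝ) → ℂ) (g : Pair d) : Pair d :=
  (fun x => -(L1 β11 β12 δ μ V φ1 φ2 g.1 x
      + ((β12 : ℂ) * conj (φ1 x) * φ2 x + (Ω : ℂ)/2) * g.2 x),
   fun x => -(((β12 : ℂ) * φ1 x * conj (φ2 x) + (Ω : ℂ)/2) * g.1 x
      + L2 β22 β12 δ μ V φ1 φ2 g.2 x))

/-- The componentwise complex conjugate of a pair. -/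
def conjPair {d : ℕ} (g : Pair d) : Pair d :=
  (fun y => conj (g.1 y), fun y => conj (g.2 y))

/-- The L² inner product of pairs: ⟨f,g⟩ = Σⱼ ∫ fⱼ conj(gⱼ). -/
def inn {d : ℕ} (f g : Pair d) : ℂ :=
  (∫ x : Fin d → ℝ, f.1 x * conj (g.1 x)) + ∫ x : Fin d → ℝ, f.2 x * conj (g.2 x)

open Filter

lemma insertNth_eq {n : ℕ} (i : Fin (n+1)) (t : ℝ) (y : Fin n → ℝ) :
    (i.insertNth t y : Fin (n+1) → ℝ) = (i.insertNth 0 y : Fin (n+1) → ℝ) + t • (Pi.single i 1 : Fin (n+1) → ℝ) := by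
  funext j
  refine Fin.succAboveCases i ?_ ?_ j
  · simp
  · intro k
    simp [Fin.insertNth_apply_succAbove, Pi.single_eq_of_ne (Fin.succAbove_ne i k)]

lemma hasDerivAt_slice {n : ℕ} (i : Fin (n+1)) (u : (Fin (n+1) → ℝ) → ℂ)
    (hu : Differentiable ℝ u) (y : Fin n → ℝ) (t : ℝ) :
    HasDerivAt (fun s => u (i.insertNth s y)) (pd i u (i.insertNth t y)) t := by
  have hA : HasDerivAt (fun s : ℝ => (i.insertNth 0 y : Fin (n+1) → ℝ) + s • (Pi.single i 1 : Fin (n+1) → ℝ))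
      (Pi.single i 1) t := by
    simpa using ((hasDerivAt_id t).smul_const (Pi.single i (1:ℝ))).const_add
      (i.insertNth 0 y : Fin (n+1) → ℝ)
  have := ((hu _).hasFDerivAt.comp_hasDerivAt t hA)
  simp only [← insertNth_eq] at this
  exact this

lemma integral_deriv_eq_zero' (w : ℝ → ℂ) (hw : Differentiable ℝ w) (hint : Integrable (deriv w))
    (htop : Tendsto w atTop (nhds 0)) (hbot : Tendsto w atBot (nhds 0)) :
    ∫ t, deriv w t = 0 := by
  have h1 : Tendsto (fun R : ℕ => ∫ t in (-(R:ℝ))..(R:ℝ), deriv w t) atTop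
      (nhds (∫ t, deriv w t)) :=
    intervalIntegral_tendsto_integral hint
      (tendsto_neg_atBot_iff.mpr tendsto_natCast_atTop_atTop) tendsto_natCast_atTop_atTop
  have h2 : ∀ R : ℕ, ∫ t in (-(R:ℝ))..(R:ℝ), deriv w t = w R - w (-(R:ℝ)) := fun R =>
    intervalIntegral.integral_deriv_eq_sub (fun x _ => hw x) hint.intervalIntegrable
  have h3 : Tendsto (fun R : ℕ => w R - w (-(R:ℝ))) atTop (nhds 0) := by
    simpa using (htop.comp tendsto_natCast_atTop_atTop).sub
      (hbot.comp (tendsto_neg_atBot_iff.mpr tendsto_natCast_atTop_atTop))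
  exact tendsto_nhds_unique (by simpa only [h2] using h1) h3

lemma integral_pd_eq_zero {n : ℕ} (i : Fin (n+1)) (u : (Fin (n+1) → ℝ) → ℂ)
    (hu : Differentiable ℝ u) (hint : Integrable (pd i u))
    (hdecay : ∀ y : Fin n → ℝ,
      Tendsto (fun t => u (i.insertNth t y)) atTop (nhds 0) ∧
      Tendsto (fun t => u (i.insertNth t y)) atBot (nhds 0)) :
    ∫ x, pd i u x = 0 := by
  have hmp : MeasurePreserving (MeasurableEquiv.piFinSuccAbove (fun _ : Fin (n+1) => ℝ) i)
      volume (volume.prod volume) := by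
    rw [← MeasureTheory.Measure.volume_eq_prod]
    exact MeasureTheory.volume_preserving_piFinSuccAbove (fun _ : Fin (n+1) => ℝ) i
  set e := MeasurableEquiv.piFinSuccAbove (fun _ : Fin (n+1) => ℝ) i with he
  have hes : ∀ (t : ℝ) (y : Fin n → ℝ), e.symm (t, y) = (i.insertNth t y : Fin (n+1) → ℝ) := by
    intro t y
    simp [he, MeasurableEquiv.piFinSuccAbove, Fin.insertNthEquiv]
  have hsymm : MeasurePreserving e.symm (volume.prod volume) volume := hmp.symm e
  have hieq : ∫ x, pd i u x = ∫ z : ℝ × (Fin n → ℝ), pd i u (e.symm z) ∂(volume.prod volume) :=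
    (hsymm.integral_comp e.symm.measurableEmbedding _).symm
  have hint2 : Integrable (fun z : ℝ × (Fin n → ℝ) => pd i u (e.symm z)) (volume.prod volume) :=
    (hsymm.integrable_comp_emb e.symm.measurableEmbedding).mpr hint
  rw [hieq, MeasureTheory.integral_prod_symm _ hint2]
  have hae := hint2.prod_left_ae
  rw [← MeasureTheory.integral_zero (Fin n → ℝ) ℂ]
  apply MeasureTheory.integral_congr_ae
  filter_upwards [hae] with y hy
  have hw : ∀ t : ℝ, deriv (fun s => u (i.insertNth s y)) t = pd i u (e.symm (t, y)) := by
    intro t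
    rw [hes]
    exact (hasDerivAt_slice i u hu y t).deriv
  have : Integrable (deriv (fun s => u (i.insertNth s y))) := by
    apply hy.congr
    exact Eventually.of_forall fun t => (hw t).symm
  have h0 := integral_deriv_eq_zero' (fun s => u (i.insertNth s y))
    (fun t => (hasDerivAt_slice i u hu y t).differentiableAt) this (hdecay y).1 (hdecay y).2
  rw [← h0]
  exact (MeasureTheory.integral_congr_ae (Eventually.of_forall fun t => (hw t).symm))

open scoped ComplexConjugate

variable {d : ℕ}

abbrev pdS (i : Fin d) (f : SchwartzMap (Fin d → ℝ) ℂ) : SchwartzMap (Fin d → ℝ) ℂ :=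
  LineDeriv.lineDerivOpCLM ℝ (SchwartzMap (Fin d → ℝ) ℂ) (Pi.single i (1:ℝ) : Fin d → ℝ) f

lemma pdS_coe (i : Fin d) (f : SchwartzMap (Fin d → ℝ) ℂ) : ⇑(pdS i f) = pd i ⇑f := by
  funext x; exact SchwartzMap.lineDerivOp_apply_eq_fderiv (Pi.single i (1:ℝ) : Fin d → ℝ) f x

lemma pd_conj (i : Fin d) (G : (Fin d → ℝ) → ℂ) (x : Fin d → ℝ) :
    pd i (fun y => conj (G y)) x = conj (pd i G x) := by
  simp only [starRingEnd_apply, pd, fderiv_star]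
  rfl

lemma schwartz_bounded (F : SchwartzMap (Fin d → ℝ) ℂ) : ∃ C, 0 < C ∧ ∀ x, ‖F x‖ ≤ C := by
  obtain ⟨C, hC, h⟩ := F.decay 0 0
  exact ⟨C, hC, fun x => by simpa using h x⟩

lemma slice_tendsto {n : ℕ} (i : Fin (n+1)) (F : SchwartzMap (Fin (n+1) → ℝ) ℂ) (y : Fin n → ℝ) :
    Tendsto (fun t => F (i.insertNth t y)) atTop (nhds 0) ∧
    Tendsto (fun t => F (i.insertNth t y)) atBot (nhds 0) := by
  obtain ⟨C, hC, h⟩ := F.decay 1 0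
  have key : ∀ t : ℝ, t ≠ 0 → ‖F (i.insertNth t y)‖ ≤ C / |t| := by
    intro t ht
    rw [le_div_iff₀ (abs_pos.mpr ht), mul_comm]
    calc |t| * ‖F (i.insertNth t y)‖
        ≤ ‖(i.insertNth t y : Fin (n+1) → ℝ)‖ * ‖F (i.insertNth t y)‖ := by
          apply mul_le_mul_of_nonneg_right _ (norm_nonneg (F (i.insertNth t y)))
          simpa using norm_le_pi_norm (i.insertNth t y : Fin (n+1) → ℝ) i
      _ ≤ C := by simpa using h (i.insertNth t y)
  have hdiv_top : Tendsto (fun t : ℝ => C / |t|) atTop (nhds 0) :=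
    Tendsto.div_atTop tendsto_const_nhds tendsto_abs_atTop_atTop
  have hdiv_bot : Tendsto (fun t : ℝ => C / |t|) atBot (nhds 0) :=
    Tendsto.div_atTop tendsto_const_nhds tendsto_abs_atBot_atTop
  constructor
  · apply squeeze_zero_norm' _ hdiv_top
    filter_upwards [eventually_ge_atTop (1:ℝ)] with t ht
    exact key t (by linarith)
  · apply squeeze_zero_norm' _ hdiv_bot
    filter_upwards [eventually_le_atBot (-1:ℝ)] with t ht
    exact key t (by linarith)

lemma one_add_pow_le (k : ℕ) (a : ℝ) (ha : 0 ≤ a) : (1+a)^k ≤ 2^k * (1 + a^k) := by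
  rcases le_total a 1 with h | h
  · calc (1+a)^k ≤ 2^k := pow_le_pow_left₀ (by linarith) (by linarith) k
      _ ≤ 2^k * (1 + a^k) := le_mul_of_one_le_right (by positivity)
          (by nlinarith [pow_nonneg ha k])
  · calc (1+a)^k ≤ (2*a)^k := pow_le_pow_left₀ (by linarith) (by linarith) k
      _ = 2^k * a^k := mul_pow 2 a k
      _ ≤ 2^k * (1 + a^k) := by nlinarith [pow_nonneg ha k, pow_pos (zero_lt_two (α := ℝ)) k]

lemma int_atom (m : (Fin d → ℝ) → ℂ) (hm : Continuous m) (k : ℕ) (C : ℝ)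
    (hb : ∀ x, ‖m x‖ ≤ C * (1+‖x‖)^k) (F G : SchwartzMap (Fin d → ℝ) ℂ) :
    Integrable fun x => m x * (F x * conj (G x)) := by
  obtain ⟨M, hM, hMb⟩ := schwartz_bounded G
  have hC : 0 ≤ C := by
    have := (norm_nonneg (m 0)).trans (hb 0)
    nlinarith [pow_pos (by positivity : (0:ℝ) < 1 + ‖(0 : Fin d → ℝ)‖) k]
  apply Integrable.mono'
    (g := fun x => (C * M * 2^k) * (‖F x‖ + ‖x‖^k * ‖F x‖))
    (((F.integrable.norm.add (F.integrable_pow_mul volume k)).const_mul _))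
    ((hm.mul (F.continuous.mul (Continuous.star G.continuous))).aestronglyMeasurable)
  apply Eventually.of_forall
  intro x
  have h1 : ‖m x * (F x * star (G x))‖ = ‖m x‖ * (‖F x‖ * ‖G x‖) := by
    simp [norm_mul]
  show ‖m x * (F x * star (G x))‖ ≤ _
  rw [h1]
  calc ‖m x‖ * (‖F x‖ * ‖G x‖)
      ≤ (C * (1+‖x‖)^k) * (‖F x‖ * M) := by
        apply mul_le_mul (hb x) _ (by positivity)
          (le_trans (by positivity) (hb x))
        exact mul_le_mul_of_nonneg_left (hMb x) (norm_nonneg _)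
    _ ≤ (C * (2^k * (1 + ‖x‖^k))) * (‖F x‖ * M) := by
        apply mul_le_mul_of_nonneg_right _ (by positivity)
        exact mul_le_mul_of_nonneg_left (one_add_pow_le k ‖x‖ (norm_nonneg x)) hC
    _ = (C * M * 2^k) * (‖F x‖ + ‖x‖^k * ‖F x‖) := by ring

lemma int_mul_conj (F G : SchwartzMap (Fin d → ℝ) ℂ) :
    Integrable fun x => F x * conj (G x) := by
  have := int_atom (fun _ => 1) continuous_const 0 1 (fun x => by simp) F G
  simpa using this

lemma pd_mul_conj (i : Fin d) (F G : SchwartzMap (Fin d → ℝ) ℂ) :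
    (pd i fun x => F x * conj (G x)) =
      fun x => pd i F x * conj (G x) + F x * conj (pd i G x) := by
  funext x
  have hG : DifferentiableAt ℝ (fun y => conj (G y)) x := by
    simp only [starRingEnd_apply]
    exact (G.differentiable x).star
  have := fderiv_fun_mul (𝕜 := ℝ) (F.differentiable x) hG
  rw [← pd_conj i G x]
  simp only [pd]
  rw [this]
  simp only [ContinuousLinearMap.add_apply, ContinuousLinearMap.smul_apply, smul_eq_mul]
  ring

lemma diff_mul_conj (F G : SchwartzMap (Fin d → ℝ) ℂ) :
    Differentiable ℝ (fun x => F x * conj (G x)) := by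
  apply F.differentiable.mul
  simp only [starRingEnd_apply]
  exact G.differentiable.star

lemma ibp (i : Fin d) (F G : SchwartzMap (Fin d → ℝ) ℂ) :
    ∫ x, pd i F x * conj (G x) = -∫ x, F x * conj (pd i G x) := by
  cases d with
  | zero => exact i.elim0
  | succ n =>
    have hint1 : Integrable fun x => pd i F x * conj (G x) := by
      have := int_mul_conj (pdS i F) G; rwa [pdS_coe] at this
    have hint2 : Integrable fun x => F x * conj (pd i G x) := by
      have := int_mul_conj F (pdS i G); rwa [pdS_coe] at this
    have h0 : ∫ x, pd i (fun x => F x * conj (G x)) x = 0 := by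
      apply integral_pd_eq_zero i _ (diff_mul_conj F G)
      · rw [pd_mul_conj]
        exact hint1.add hint2
      · intro y
        obtain ⟨M, hM, hMb⟩ := schwartz_bounded G
        have hb : ∀ t : ℝ, ‖F (i.insertNth t y) * conj (G (i.insertNth t y))‖
            ≤ M * ‖F (i.insertNth t y)‖ := by
          intro t
          rw [norm_mul, RCLike.norm_conj, mul_comm]
          exact mul_le_mul_of_nonneg_right (hMb _) (norm_nonneg _)
        constructor
        · exact squeeze_zero_norm hb (((slice_tendsto i F y).1.norm).const_mul M |>.congr
            (fun t => rfl) |>.mono_left le_rfl |> (by simpa using ·))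
        · exact squeeze_zero_norm hb (by simpa using ((slice_tendsto i F y).2.norm).const_mul M)
    rw [pd_mul_conj] at h0
    rw [integral_add hint1 hint2] at h0
    linear_combination h0

abbrev lapS (f : SchwartzMap (Fin d → ℝ) ℂ) : SchwartzMap (Fin d → ℝ) ℂ :=
  ∑ i : Fin d, pdS i (pdS i f)

lemma lapS_coe (f : SchwartzMap (Fin d → ℝ) ℂ) : ⇑(lapS f) = lap ⇑f := by
  funext x
  have hc : (⇑(lapS f) : (Fin d → ℝ) → ℂ) = ∑ i : Fin d, ⇑(pdS i (pdS i f)) :=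
    map_sum (FunLike.coeAddMonoidHom (SchwartzMap (Fin d → ℝ) ℂ) (Fin d → ℝ) ℂ) _ _
  rw [lap, show (lapS f) x = ∑ i : Fin d, (pdS i (pdS i f)) x by
    rw [show (lapS f) x = (⇑(lapS f)) x from rfl, hc, Finset.sum_apply]]
  exact Finset.sum_congr rfl fun i _ => by
    rw [show (pdS i (pdS i f)) x = pd i ⇑(pdS i f) x from congrFun (pdS_coe i (pdS i f)) x,
      pdS_coe]

lemma int_lap_mul_conj (F G : SchwartzMap (Fin d → ℝ) ℂ) :
    Integrable fun x => lap F x * conj (G x) := by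
  have := int_mul_conj (lapS F) G; rwa [lapS_coe] at this

lemma int_mul_conj_lap (F G : SchwartzMap (Fin d → ℝ) ℂ) :
    Integrable fun x => F x * conj (lap G x) := by
  have := int_mul_conj F (lapS G); rwa [lapS_coe] at this

lemma lap_symm (F G : SchwartzMap (Fin d → ℝ) ℂ) :
    ∫ x, lap F x * conj (G x) = ∫ x, F x * conj (lap G x) := by
  have hL : ∫ x, lap F x * conj (G x) = ∑ i : Fin d, ∫ x, pd i (pd i ⇑F) x * conj (G x) := by
    rw [show (fun x => lap F x * conj (G x))
        = fun x => ∑ i : Fin d, pd i (pd i ⇑F) x * conj (G x) by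
      funext x; rw [lap, Finset.sum_mul]]
    apply integral_finset_sum
    intro i _
    have := int_mul_conj (pdS i (pdS i F)) G
    rwa [show ⇑(pdS i (pdS i F)) = pd i (pd i ⇑F) by rw [pdS_coe, pdS_coe]] at this
  have hR : ∫ x, F x * conj (lap G x) = ∑ i : Fin d, ∫ x, F x * conj (pd i (pd i ⇑G) x) := by
    rw [show (fun x => F x * conj (lap G x))
        = fun x => ∑ i : Fin d, F x * conj (pd i (pd i ⇑G) x) by
      funext x; rw [lap, map_sum, Finset.mul_sum]]
    apply integral_finset_sum
    intro i _
    have := int_mul_conj F (pdS i (pdS i G))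
    rwa [show ⇑(pdS i (pdS i G)) = pd i (pd i ⇑G) by rw [pdS_coe, pdS_coe]] at this
  rw [hL, hR]
  apply Finset.sum_congr rfl
  intro i _
  have h1 := ibp i (pdS i F) G
  rw [pdS_coe] at h1
  have h2 := ibp i F (pdS i G)
  rw [pdS_coe] at h2
  rw [h1, h2, neg_neg]

lemma integral_add3 {A B C : (Fin d → ℝ) → ℂ} (hA : Integrable A) (hB : Integrable B)
    (hC : Integrable C) :
    ∫ x, A x + (B x + C x) = (∫ x, A x) + ((∫ x, B x) + ∫ x, C x) := by
  have hBC : Integrable (fun x => B x + C x) := hB.add hC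
  rw [integral_add hA hBC, integral_add hB hC]

lemma key_symm (W1 W2 : (Fin d → ℝ) → ℝ) (a b : (Fin d → ℝ) → ℂ)
    (hab : ∀ x, conj (a x) = b x)
    (hW1 : ∀ F G : SchwartzMap (Fin d → ℝ) ℂ,
      Integrable fun x => ((W1 x : ℝ) : ℂ) * (F x * conj (G x)))
    (hW2 : ∀ F G : SchwartzMap (Fin d → ℝ) ℂ,
      Integrable fun x => ((W2 x : ℝ) : ℂ) * (F x * conj (G x)))
    (ha : ∀ F G : SchwartzMap (Fin d → ℝ) ℂ, Integrable fun x => a x * (F x * conj (G x)))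
    (hb : ∀ F G : SchwartzMap (Fin d → ℝ) ℂ, Integrable fun x => b x * (F x * conj (G x)))
    (f1 f2 g1 g2 : SchwartzMap (Fin d → ℝ) ℂ) :
    ((∫ x, (-(1/2:ℂ) * lap f1 x + ((W1 x : ℝ) : ℂ) * f1 x + a x * f2 x) * conj (g1 x)) +
      ∫ x, (b x * f1 x + (-(1/2:ℂ) * lap f2 x + ((W2 x : ℝ) : ℂ) * f2 x)) * conj (g2 x))
    = ((∫ x, f1 x * conj (-(1/2:ℂ) * lap g1 x + ((W1 x : ℝ) : ℂ) * g1 x + a x * g2 x)) +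
      ∫ x, f2 x * conj (b x * g1 x + (-(1/2:ℂ) * lap g2 x + ((W2 x : ℝ) : ℂ) * g2 x))) := by
  have hL1 : (∫ x, (-(1/2:ℂ) * lap f1 x + ((W1 x : ℝ) : ℂ) * f1 x + a x * f2 x) * conj (g1 x))
      = (∫ x, -(1/2:ℂ) * (lap f1 x * conj (g1 x)))
        + ((∫ x, ((W1 x : ℝ) : ℂ) * (f1 x * conj (g1 x)))
          + ∫ x, a x * (f2 x * conj (g1 x))) := by
    rw [show (fun x => (-(1/2:ℂ) * lap f1 x + ((W1 x : ℝ) : ℂ) * f1 x + a x * f2 x) * conj (g1 x))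
        = fun x => -(1/2:ℂ) * (lap f1 x * conj (g1 x))
          + (((W1 x : ℝ) : ℂ) * (f1 x * conj (g1 x)) + a x * (f2 x * conj (g1 x))) by
      funext x; ring]
    exact integral_add3 ((int_lap_mul_conj f1 g1).const_mul (-(1/2:ℂ))) (hW1 f1 g1) (ha f2 g1)
  have hL2 : (∫ x, (b x * f1 x + (-(1/2:ℂ) * lap f2 x + ((W2 x : ℝ) : ℂ) * f2 x)) * conj (g2 x))
      = (∫ x, b x * (f1 x * conj (g2 x)))
        + ((∫ x, -(1/2:ℂ) * (lap f2 x * conj (g2 x)))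
          + ∫ x, ((W2 x : ℝ) : ℂ) * (f2 x * conj (g2 x))) := by
    rw [show (fun x => (b x * f1 x + (-(1/2:ℂ) * lap f2 x + ((W2 x : ℝ) : ℂ) * f2 x))
          * conj (g2 x))
        = fun x => b x * (f1 x * conj (g2 x))
          + (-(1/2:ℂ) * (lap f2 x * conj (g2 x)) + ((W2 x : ℝ) : ℂ) * (f2 x * conj (g2 x))) by
      funext x; ring]
    exact integral_add3 (hb f1 g2) ((int_lap_mul_conj f2 g2).const_mul (-(1/2:ℂ))) (hW2 f2 g2)
  have hR1 : (∫ x, f1 x * conj (-(1/2:ℂ) * lap g1 x + ((W1 x : ℝ) : ℂ) * g1 x + a x * g2 x))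
      = (∫ x, -(1/2:ℂ) * (f1 x * conj (lap g1 x)))
        + ((∫ x, ((W1 x : ℝ) : ℂ) * (f1 x * conj (g1 x)))
          + ∫ x, b x * (f1 x * conj (g2 x))) := by
    rw [show (fun x => f1 x * conj (-(1/2:ℂ) * lap g1 x + ((W1 x : ℝ) : ℂ) * g1 x + a x * g2 x))
        = fun x => -(1/2:ℂ) * (f1 x * conj (lap g1 x))
          + (((W1 x : ℝ) : ℂ) * (f1 x * conj (g1 x)) + b x * (f1 x * conj (g2 x))) by
      funext x
      rw [← hab x]
      simp only [map_add, map_mul, map_neg, map_div₀, map_one, map_ofNat, Complex.conj_ofReal]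
      ring]
    exact integral_add3 ((int_mul_conj_lap f1 g1).const_mul (-(1/2:ℂ))) (hW1 f1 g1) (hb f1 g2)
  have hR2 : (∫ x, f2 x * conj (b x * g1 x + (-(1/2:ℂ) * lap g2 x + ((W2 x : ℝ) : ℂ) * g2 x)))
      = (∫ x, a x * (f2 x * conj (g1 x)))
        + ((∫ x, -(1/2:ℂ) * (f2 x * conj (lap g2 x)))
          + ∫ x, ((W2 x : ℝ) : ℂ) * (f2 x * conj (g2 x))) := by
    rw [show (fun x => f2 x * conj (b x * g1 x + (-(1/2:ℂ) * lap g2 x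
            + ((W2 x : ℝ) : ℂ) * g2 x)))
        = fun x => a x * (f2 x * conj (g1 x))
          + (-(1/2:ℂ) * (f2 x * conj (lap g2 x)) + ((W2 x : ℝ) : ℂ) * (f2 x * conj (g2 x))) by
      funext x
      rw [show a x = conj (b x) by rw [← hab x, Complex.conj_conj]]
      simp only [map_add, map_mul, map_neg, map_div₀, map_one, map_ofNat, Complex.conj_ofReal,
        Complex.conj_conj]
      ring]
    exact integral_add3 (ha f2 g1) ((int_mul_conj_lap f2 g2).const_mul (-(1/2:ℂ))) (hW2 f2 g2)
  have hlap1 : (∫ x, -(1/2:ℂ) * (lap f1 x * conj (g1 x)))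
      = ∫ x, -(1/2:ℂ) * (f1 x * conj (lap g1 x)) := by
    rw [integral_const_mul, integral_const_mul, lap_symm]
  have hlap2 : (∫ x, -(1/2:ℂ) * (lap f2 x * conj (g2 x)))
      = ∫ x, -(1/2:ℂ) * (f2 x * conj (lap g2 x)) := by
    rw [integral_const_mul, integral_const_mul, lap_symm]
  rw [hL1, hL2, hR1, hR2, hlap1, hlap2]
  ring

lemma int_bdd (m : (Fin d → ℝ) → ℂ) (hm : Continuous m) (C : ℝ) (hC : ∀ x, ‖m x‖ ≤ C)
    (F G : SchwartzMap (Fin d → ℝ) ℂ) :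
    Integrable fun x => m x * (F x * conj (G x)) :=
  int_atom m hm 0 C (fun x => by simpa using hC x) F G

lemma key_B (p q r p' q' r' : (Fin d → ℝ) → ℂ)
    (hp : ∀ x, conj (p x) = p' x) (hq : ∀ x, conj (q x) = q' x) (hr : ∀ x, conj (r x) = r' x)
    (ip : ∀ F G : SchwartzMap (Fin d → ℝ) ℂ, Integrable fun x => p x * (F x * conj (G x)))
    (iq : ∀ F G : SchwartzMap (Fin d → ℝ) ℂ, Integrable fun x => q x * (F x * conj (G x)))
    (ir : ∀ F G : SchwartzMap (Fin d → ℝ) ℂ, Integrable fun x => r x * (F x * conj (G x)))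
    (f1 f2 g1 g2 : SchwartzMap (Fin d → ℝ) ℂ) :
    ((∫ x, (p x * f1 x + q x * f2 x) * conj (g1 x))
      + ∫ x, (q x * f1 x + r x * f2 x) * conj (g2 x))
    = ((∫ x, f1 x * conj (p' x * g1 x + q' x * g2 x))
      + ∫ x, f2 x * conj (q' x * g1 x + r' x * g2 x)) := by
  have hL1 : (∫ x, (p x * f1 x + q x * f2 x) * conj (g1 x))
      = (∫ x, p x * (f1 x * conj (g1 x))) + ∫ x, q x * (f2 x * conj (g1 x)) := by
    rw [show (fun x => (p x * f1 x + q x * f2 x) * conj (g1 x))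
        = fun x => p x * (f1 x * conj (g1 x)) + q x * (f2 x * conj (g1 x)) by
      funext x; ring]
    exact integral_add (ip f1 g1) (iq f2 g1)
  have hL2 : (∫ x, (q x * f1 x + r x * f2 x) * conj (g2 x))
      = (∫ x, q x * (f1 x * conj (g2 x))) + ∫ x, r x * (f2 x * conj (g2 x)) := by
    rw [show (fun x => (q x * f1 x + r x * f2 x) * conj (g2 x))
        = fun x => q x * (f1 x * conj (g2 x)) + r x * (f2 x * conj (g2 x)) by
      funext x; ring]
    exact integral_add (iq f1 g2) (ir f2 g2)
  have hR1 : (∫ x, f1 x * conj (p' x * g1 x + q' x * g2 x))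
      = (∫ x, p x * (f1 x * conj (g1 x))) + ∫ x, q x * (f1 x * conj (g2 x)) := by
    rw [show (fun x => f1 x * conj (p' x * g1 x + q' x * g2 x))
        = fun x => p x * (f1 x * conj (g1 x)) + q x * (f1 x * conj (g2 x)) by
      funext x; rw [← hp x, ← hq x]
      simp only [map_add, map_mul, Complex.conj_conj]
      ring]
    exact integral_add (ip f1 g1) (iq f1 g2)
  have hR2 : (∫ x, f2 x * conj (q' x * g1 x + r' x * g2 x))
      = (∫ x, q x * (f2 x * conj (g1 x))) + ∫ x, r x * (f2 x * conj (g2 x)) := by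
    rw [show (fun x => f2 x * conj (q' x * g1 x + r' x * g2 x))
        = fun x => q x * (f2 x * conj (g1 x)) + r x * (f2 x * conj (g2 x)) by
      funext x; rw [← hq x, ← hr x]
      simp only [map_add, map_mul, Complex.conj_conj]
      ring]
    exact integral_add (iq f2 g1) (ir f2 g2)
  rw [hL1, hL2, hR1, hR2]
  ring

lemma integral_neg_mul (P Q : (Fin d → ℝ) → ℂ) :
    ∫ x, -(P x) * Q x = -∫ x, P x * Q x := by
  rw [← integral_neg]
  congr 1
  funext x
  ring

lemma integral_mul_conj_neg (P Q : (Fin d → ℝ) → ℂ) :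
    ∫ x, P x * conj (-(Q x)) = -∫ x, P x * conj (Q x) := by
  rw [← integral_neg]
  congr 1
  funext x
  rw [map_neg]
  ring
theorem opA_opD_symmetric_opB_adjoint_neg_opC
    {d : ℕ} (hd : 1 ≤ d) (β11 β22 β12 δ Ω μ : ℝ) (V : (Fin d → ℝ) → ℝ)
    (hV : Function.HasTemperateGrowth V)
    (φ1 φ2 : SchwartzMap (Fin d → ℝ) ℂ)
    (f1 f2 g1 g2 : SchwartzMap (Fin d → ℝ) ℂ) :
    inn (opA β11 β22 β12 δ Ω μ V ⇑φ1 ⇑φ2 (⇑f1, ⇑f2)) (⇑g1, ⇑g2)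
        = inn (⇑f1, ⇑f2) (opA β11 β22 β12 δ Ω μ V ⇑φ1 ⇑φ2 (⇑g1, ⇑g2))
    ∧ inn (opD β11 β22 β12 δ Ω μ V ⇑φ1 ⇑φ2 (⇑f1, ⇑f2)) (⇑g1, ⇑g2)
        = inn (⇑f1, ⇑f2) (opD β11 β22 β12 δ Ω μ V ⇑φ1 ⇑φ2 (⇑g1, ⇑g2))
    ∧ inn (opB β11 β22 β12 ⇑φ1 ⇑φ2 (⇑f1, ⇑f2)) (⇑g1, ⇑g2)
        = -(inn (⇑f1, ⇑f2) (opC β11 β22 β12 ⇑φ1 ⇑φ2 (⇑g1, ⇑g2))) := by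
  obtain ⟨M1, hM1, hM1b⟩ := schwartz_bounded φ1
  obtain ⟨M2, hM2, hM2b⟩ := schwartz_bounded φ2
  obtain ⟨kV, CV, hVC⟩ := hV.2 0
  have hVb : ∀ x, ‖((V x : ℝ) : ℂ)‖ ≤ |CV| * (1+‖x‖)^kV := by
    intro x
    have h0 := hVC x
    rw [norm_iteratedFDeriv_zero] at h0
    rw [Complex.norm_real]
    calc ‖V x‖ ≤ CV * (1+‖x‖)^kV := h0
      _ ≤ |CV| * (1+‖x‖)^kV := mul_le_mul_of_nonneg_right (le_abs_self CV) (by positivity)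
  have hVcont : Continuous V := hV.1.continuous
  have hint_V : ∀ F G : SchwartzMap (Fin d → ℝ) ℂ,
      Integrable fun x => ((V x : ℝ) : ℂ) * (F x * conj (G x)) := fun F G =>
    int_atom _ (Complex.continuous_ofReal.comp hVcont) kV |CV| hVb F G
  have hphi1sq : ∀ x, ‖φ1 x‖^2 ≤ M1^2 := fun x => pow_le_pow_left₀ (norm_nonneg _) (hM1b x) 2
  have hphi2sq : ∀ x, ‖φ2 x‖^2 ≤ M2^2 := fun x => pow_le_pow_left₀ (norm_nonneg _) (hM2b x) 2
  have hconj1 : Continuous fun x => conj (φ1 x) := by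
    exact φ1.continuous.star
  have hconj2 : Continuous fun x => conj (φ2 x) := by
    exact φ2.continuous.star
  -- integrability of the potential-type multipliers
  have hS : ∀ (c1 c2 c3 c4 : ℝ) (F G : SchwartzMap (Fin d → ℝ) ℂ),
      Integrable fun x =>
        ((V x + c1 + c2*‖φ1 x‖^2 + c3*‖φ2 x‖^2 - c4 : ℝ) : ℂ) * (F x * conj (G x)) := by
    intro c1 c2 c3 c4 F G
    have e : (fun x => ((V x + c1 + c2*‖φ1 x‖^2 + c3*‖φ2 x‖^2 - c4 : ℝ) : ℂ)
          * (F x * conj (G x)))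
        = fun x => ((V x : ℝ) : ℂ) * (F x * conj (G x))
          + ((c1 + c2*‖φ1 x‖^2 + c3*‖φ2 x‖^2 - c4 : ℝ) : ℂ) * (F x * conj (G x)) := by
      funext x; push_cast; ring
    rw [e]
    refine (hint_V F G).add (int_bdd _ ?_ (|c1| + |c2| * M1^2 + (|c3| * M2^2 + |c4|)) ?_ F G)
    · exact Complex.continuous_ofReal.comp
        (((continuous_const.add (continuous_const.mul ((φ1.continuous.norm).pow 2))).add
          (continuous_const.mul ((φ2.continuous.norm).pow 2))).sub continuous_const)
    · intro x
      rw [Complex.norm_real, Real.norm_eq_abs, abs_le]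
      constructor <;>
        nlinarith [hphi1sq x, hphi2sq x, sq_nonneg ‖φ1 x‖, sq_nonneg ‖φ2 x‖,
          le_abs_self c1, neg_abs_le c1, le_abs_self c4, neg_abs_le c4,
          mul_nonneg (sub_nonneg.mpr (le_abs_self c2)) (sq_nonneg ‖φ1 x‖),
          mul_nonneg (sub_nonneg.mpr (neg_abs_le c2)) (sq_nonneg ‖φ1 x‖),
          mul_nonneg (abs_nonneg c2) (sub_nonneg.mpr (hphi1sq x)),
          mul_nonneg (sub_nonneg.mpr (le_abs_self c3)) (sq_nonneg ‖φ2 x‖),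
          mul_nonneg (sub_nonneg.mpr (neg_abs_le c3)) (sq_nonneg ‖φ2 x‖),
          mul_nonneg (abs_nonneg c3) (sub_nonneg.mpr (hphi2sq x))]
  -- the off-diagonal coefficients
  have haiA : ∀ F G : SchwartzMap (Fin d → ℝ) ℂ,
      Integrable fun x => ((β12 : ℂ) * φ1 x * conj (φ2 x) + (Ω : ℂ)/2)
        * (F x * conj (G x)) := by
    intro F G
    refine int_bdd _ ?_ (|β12| * (M1*M2) + |Ω|/2) ?_ F G
    · exact ((continuous_const.mul φ1.continuous).mul hconj2).add continuous_const
    · intro x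
      calc ‖(β12 : ℂ) * φ1 x * conj (φ2 x) + (Ω : ℂ)/2‖
          ≤ ‖(β12 : ℂ) * φ1 x * conj (φ2 x)‖ + ‖(Ω : ℂ)/2‖ := norm_add_le _ _
        _ = |β12| * ‖φ1 x‖ * ‖φ2 x‖ + |Ω|/2 := by
            rw [norm_mul, norm_mul, RCLike.norm_conj, norm_div]
            simp [Complex.norm_real, Real.norm_eq_abs]
        _ ≤ |β12| * (M1*M2) + |Ω|/2 := by
            have h12 : ‖φ1 x‖ * ‖φ2 x‖ ≤ M1 * M2 :=
              mul_le_mul (hM1b x) (hM2b x) (norm_nonneg _) hM1.le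
            nlinarith [abs_nonneg β12, norm_nonneg (φ1 x), norm_nonneg (φ2 x)]
  have haiD : ∀ F G : SchwartzMap (Fin d → ℝ) ℂ,
      Integrable fun x => ((β12 : ℂ) * conj (φ1 x) * φ2 x + (Ω : ℂ)/2)
        * (F x * conj (G x)) := by
    intro F G
    refine int_bdd _ ?_ (|β12| * (M1*M2) + |Ω|/2) ?_ F G
    · exact ((continuous_const.mul hconj1).mul φ2.continuous).add continuous_const
    · intro x
      calc ‖(β12 : ℂ) * conj (φ1 x) * φ2 x + (Ω : ℂ)/2‖
          ≤ ‖(β12 : ℂ) * conj (φ1 x) * φ2 x‖ + ‖(Ω : ℂ)/2‖ := norm_add_le _ _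
        _ = |β12| * ‖φ1 x‖ * ‖φ2 x‖ + |Ω|/2 := by
            rw [norm_mul, norm_mul, RCLike.norm_conj, norm_div]
            simp [Complex.norm_real, Real.norm_eq_abs]
        _ ≤ |β12| * (M1*M2) + |Ω|/2 := by
            have h12 : ‖φ1 x‖ * ‖φ2 x‖ ≤ M1 * M2 :=
              mul_le_mul (hM1b x) (hM2b x) (norm_nonneg _) hM1.le
            nlinarith [abs_nonneg β12, norm_nonneg (φ1 x), norm_nonneg (φ2 x)]
  have habA : ∀ x, conj ((β12 : ℂ) * φ1 x * conj (φ2 x) + (Ω : ℂ)/2)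
      = (β12 : ℂ) * conj (φ1 x) * φ2 x + (Ω : ℂ)/2 := by
    intro x
    simp [map_add, map_mul, map_div₀, map_ofNat, Complex.conj_ofReal, Complex.conj_conj]
  have habD : ∀ x, conj ((β12 : ℂ) * conj (φ1 x) * φ2 x + (Ω : ℂ)/2)
      = (β12 : ℂ) * φ1 x * conj (φ2 x) + (Ω : ℂ)/2 := by
    intro x
    simp [map_add, map_mul, map_div₀, map_ofNat, Complex.conj_ofReal, Complex.conj_conj]
  refine ⟨?_, ?_, ?_⟩
  · -- 𝒜 is symmetric
    simp only [inn, opA, L1, L2]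
    exact key_symm _ _ _ _ habA (hS _ _ _ _) (hS _ _ _ _) haiA haiD f1 f2 g1 g2
  · -- 𝒟 is symmetric
    simp only [inn, opD, L1, L2]
    rw [integral_neg_mul, integral_neg_mul, integral_mul_conj_neg, integral_mul_conj_neg,
      ← neg_add, ← neg_add]
    exact neg_inj.mpr
      (key_symm _ _ _ _ habD (hS _ _ _ _) (hS _ _ _ _) haiD haiA f1 f2 g1 g2)
  · -- adjoint of ℬ is -𝒞
    -- bounded multipliers
    have hip : ∀ F G : SchwartzMap (Fin d → ℝ) ℂ,
        Integrable fun x => ((β11 : ℂ) * (φ1 x)^2) * (F x * conj (G x)) := by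
      intro F G
      refine int_bdd _ (continuous_const.mul (φ1.continuous.pow 2)) (|β11| * M1^2) ?_ F G
      intro x
      show ‖(β11 : ℂ) * (φ1 x)^2‖ ≤ _
      rw [norm_mul, norm_pow]
      simp only [Complex.norm_real, Real.norm_eq_abs]
      exact mul_le_mul_of_nonneg_left (hphi1sq x) (abs_nonneg β11)
    have hiq : ∀ F G : SchwartzMap (Fin d → ℝ) ℂ,
        Integrable fun x => ((β12 : ℂ) * φ1 x * φ2 x) * (F x * conj (G x)) := by
      intro F G
      refine int_bdd _ ((continuous_const.mul φ1.continuous).mul φ2.continuous)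
        (|β12| * (M1*M2)) ?_ F G
      intro x
      show ‖(β12 : ℂ) * φ1 x * φ2 x‖ ≤ _
      rw [norm_mul, norm_mul]
      simp only [Complex.norm_real, Real.norm_eq_abs]
      have h12 : ‖φ1 x‖ * ‖φ2 x‖ ≤ M1 * M2 :=
        mul_le_mul (hM1b x) (hM2b x) (norm_nonneg _) hM1.le
      calc |β12| * ‖φ1 x‖ * ‖φ2 x‖ = |β12| * (‖φ1 x‖ * ‖φ2 x‖) := by ring
        _ ≤ |β12| * (M1*M2) := mul_le_mul_of_nonneg_left h12 (abs_nonneg β12)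
    have hir : ∀ F G : SchwartzMap (Fin d → ℝ) ℂ,
        Integrable fun x => ((β22 : ℂ) * (φ2 x)^2) * (F x * conj (G x)) := by
      intro F G
      refine int_bdd _ (continuous_const.mul (φ2.continuous.pow 2)) (|β22| * M2^2) ?_ F G
      intro x
      show ‖(β22 : ℂ) * (φ2 x)^2‖ ≤ _
      rw [norm_mul, norm_pow]
      simp only [Complex.norm_real, Real.norm_eq_abs]
      exact mul_le_mul_of_nonneg_left (hphi2sq x) (abs_nonneg β22)
    have hp : ∀ x, conj ((β11 : ℂ) * (φ1 x)^2) = (β11 : ℂ) * (conj (φ1 x))^2 := by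
      intro x; simp [map_mul, map_pow, Complex.conj_ofReal]
    have hq : ∀ x, conj ((β12 : ℂ) * φ1 x * φ2 x)
        = (β12 : ℂ) * conj (φ1 x) * conj (φ2 x) := by
      intro x; simp [map_mul, Complex.conj_ofReal]
    have hr : ∀ x, conj ((β22 : ℂ) * (φ2 x)^2) = (β22 : ℂ) * (conj (φ2 x))^2 := by
      intro x; simp [map_mul, map_pow, Complex.conj_ofReal]
    simp only [inn, opB, opC]
    rw [integral_mul_conj_neg, integral_mul_conj_neg, neg_add, neg_neg, neg_neg]
    exact key_B _ _ _ _ _ _ hp hq hr hip hiq hir f1 f2 g1 g2
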